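/- The number of unlabeled height-2 bipartite posets with exactly $m \ge 1$ top elements and $n \ge 1$ bottom elements, avoiding $(2+2)$, having no isolated vertices removed from consideration, and having no all-seeing vertices (no bottom vertex below all top vertices and no top vertex above all bottom vertices, allowing isolated vertices), equals $\binom{m+n-2}{n-1}$. -/

import Mathlib

namespace UnlabeledFaceoff

open Finset

variable {m n : ℕ}

/-- The defining condition on labeled relations. -/
def Cond (m n : ℕ) (E : Finset (Fin n × Fin m)) : Prop :=
  (∀ b b' : Fin n, (∀ t, (b, t) ∈ E → (b', t) ∈ E) ∨ (∀ t, (b', t) ∈ E → (b, t) ∈ E)) ∧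
  (∀ b : Fin n, ∃ t : Fin m, (b, t) ∉ E) ∧
  (∀ t : Fin m, ∃ b : Fin n, (b, t) ∉ E)

/-- The relabeling relation. -/
def Rel (E E' : {E : Finset (Fin n × Fin m) // Cond m n E}) : Prop :=
  ∃ (σ : Equiv.Perm (Fin n)) (τ : Equiv.Perm (Fin m)),
    ∀ (b : Fin n) (t : Fin m), (b, t) ∈ E.1 ↔ (σ b, τ t) ∈ E'.1

/-- Up-set of a bottom vertex. -/
def upset (E : Finset (Fin n × Fin m)) (b : Fin n) : Finset (Fin m) :=
  univ.filter fun t => (b, t) ∈ E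

lemma mem_upset {E : Finset (Fin n × Fin m)} {b : Fin n} {t : Fin m} :
    t ∈ upset E b ↔ (b, t) ∈ E := by simp [upset]

/-- Number of bottom vertices below a top vertex. -/
def rk (E : Finset (Fin n × Fin m)) (t : Fin m) : ℕ :=
  (univ.filter fun b => (b, t) ∈ E).card

/-- Number of bottom vertices whose up-set contains that of `b`. -/
def dg (E : Finset (Fin n × Fin m)) (b : Fin n) : ℕ :=
  (univ.filter fun b' => upset E b ⊆ upset E b').card

lemma chain {E : Finset (Fin n × Fin m)} (h : Cond m n E) (b b' : Fin n) :
    upset E b ⊆ upset E b' ∨ upset E b' ⊆ upset E b := by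
  rcases h.1 b b' with h1 | h1
  · exact Or.inl fun t ht => mem_upset.mpr (h1 t (mem_upset.mp ht))
  · exact Or.inr fun t ht => mem_upset.mpr (h1 t (mem_upset.mp ht))

lemma subset_of_card_le {E : Finset (Fin n × Fin m)} (h : Cond m n E) {b b' : Fin n}
    (hc : (upset E b).card ≤ (upset E b').card) : upset E b ⊆ upset E b' := by
  rcases chain h b b' with h1 | h1
  · exact h1
  · rw [Finset.eq_of_subset_of_card_le h1 hc]

lemma mem_upset_iff_rk {E : Finset (Fin n × Fin m)} (h : Cond m n E) (b : Fin n) (t : Fin m) :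
    t ∈ upset E b ↔ dg E b ≤ rk E t := by
  constructor
  · intro ht
    apply Finset.card_le_card
    intro b' hb'
    simp only [mem_filter, mem_univ, true_and] at hb' ⊢
    exact mem_upset.mp (hb' ht)
  · intro hle
    by_contra hne
    have hsub : (univ.filter fun b' => (b', t) ∈ E) ⊆
        (univ.filter fun b' => upset E b ⊆ upset E b').erase b := by
      intro b' hb'
      simp only [mem_filter, mem_univ, true_and] at hb'
      rw [Finset.mem_erase]
      constructor
      · rintro rfl; exact hne (mem_upset.mpr hb')
      · simp only [mem_filter, mem_univ, true_and]
        rcases chain h b b' with h1 | h1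
        · exact h1
        · exact absurd (h1 (mem_upset.mpr hb')) hne
    have hmem : b ∈ (univ.filter fun b' => upset E b ⊆ upset E b') := by
      simp
    have := Finset.card_le_card hsub
    have := Finset.card_erase_lt_of_mem hmem
    unfold rk dg at hle
    omega

lemma upset_eq_filter {E : Finset (Fin n × Fin m)} (h : Cond m n E) (b : Fin n) :
    upset E b = univ.filter fun t => dg E b ≤ rk E t := by
  ext t
  simp only [mem_filter, mem_univ, true_and]
  exact mem_upset_iff_rk h b t

lemma card_upset_lt {E : Finset (Fin n × Fin m)} (h : Cond m n E) (b : Fin n) :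
    (upset E b).card < m := by
  obtain ⟨t, ht⟩ := h.2.1 b
  have hss : upset E b ⊂ univ := by
    rw [Finset.ssubset_univ_iff]
    intro he
    exact ht (mem_upset.mp (he ▸ mem_univ t))
  simpa using Finset.card_lt_card hss

/-- Up-set size, as an element of `Fin m`. -/
def szF (E : Finset (Fin n × Fin m)) (h : Cond m n E) (b : Fin n) : Fin m :=
  ⟨(upset E b).card, card_upset_lt h b⟩

/-- The multiset of up-set sizes. -/
def F (E : {E : Finset (Fin n × Fin m) // Cond m n E}) : Multiset (Fin m) :=
  univ.val.map (szF E.1 E.2)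

lemma card_F (E : {E : Finset (Fin n × Fin m) // Cond m n E}) :
    Multiset.card (F E) = n := by
  simp only [F, Multiset.card_map]
  simpa using (Finset.card_univ (α := Fin n))

lemma zero_mem_F [NeZero m] (hn : 1 ≤ n) (E : {E : Finset (Fin n × Fin m) // Cond m n E}) :
    (0 : Fin m) ∈ F E := by
  haveI : Nonempty (Fin n) := ⟨⟨0, hn⟩⟩
  obtain ⟨b0, _, hb0⟩ := Finset.exists_min_image univ (fun b => (upset E.1 b).card)
    Finset.univ_nonempty
  have hempty : upset E.1 b0 = ∅ := by
    rw [Finset.eq_empty_iff_forall_notMem]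
    intro t ht
    obtain ⟨b, hb⟩ := E.2.2.2 t
    exact hb (mem_upset.mp (subset_of_card_le E.2 (hb0 b (mem_univ b)) ht))
  have : szF E.1 E.2 b0 = 0 := by
    apply Fin.ext
    simp [szF, hempty]
  rw [F, ← this]
  exact Multiset.mem_map_of_mem _ (Finset.mem_univ_val b0)

lemma F_eq_of_rel {E E' : {E : Finset (Fin n × Fin m) // Cond m n E}} (h : Rel E E') :
    F E = F E' := by
  obtain ⟨σ, τ, hrel⟩ := h
  have hup : ∀ b, upset E'.1 (σ b) = (upset E.1 b).map τ.toEmbedding := by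
    intro b
    ext t'
    simp only [Finset.mem_map, Equiv.coe_toEmbedding]
    constructor
    · intro ht'
      exact ⟨τ.symm t', mem_upset.mpr ((hrel b (τ.symm t')).mpr
        (by simpa using mem_upset.mp ht')), by simp⟩
    · rintro ⟨t, ht, rfl⟩
      exact mem_upset.mpr ((hrel b t).mp (mem_upset.mp ht))
  have hsz : ∀ b, szF E.1 E.2 b = szF E'.1 E'.2 (σ b) := by
    intro b
    apply Fin.ext
    simp [szF, hup b, Finset.card_map]
  have huniv : Finset.univ.val.map σ = Finset.univ.val := by
    have := Finset.map_univ_equiv σ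
    calc Finset.univ.val.map σ = (Finset.univ.map σ.toEmbedding).val := by
          rw [Finset.map_val]; rfl
      _ = Finset.univ.val := by rw [this]
  calc F E = Finset.univ.val.map (szF E'.1 E'.2 ∘ σ) := by
        unfold F; exact Multiset.map_congr rfl (fun b _ => hsz b)
    _ = (Finset.univ.val.map σ).map (szF E'.1 E'.2) := by rw [Multiset.map_map]
    _ = F E' := by rw [huniv]; rfl

/-- The canonical relation attached to a tuple of sizes. -/
def canon (a : Fin n → Fin m) : Finset (Fin n × Fin m) :=
  univ.filter fun p => (p.2 : ℕ) < (a p.1 : ℕ)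

lemma mem_canon {a : Fin n → Fin m} {b : Fin n} {t : Fin m} :
    (b, t) ∈ canon a ↔ (t : ℕ) < (a b : ℕ) := by simp [canon]

lemma cond_canon (a : Fin n → Fin m) (h0 : ∃ b, (a b : ℕ) = 0) : Cond m n (canon a) := by
  refine ⟨?_, ?_, ?_⟩
  · intro b b'
    rcases le_total (a b : ℕ) (a b' : ℕ) with h1 | h1
    · exact Or.inl fun t ht => mem_canon.mpr (lt_of_lt_of_le (mem_canon.mp ht) h1)
    · exact Or.inr fun t ht => mem_canon.mpr (lt_of_lt_of_le (mem_canon.mp ht) h1)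
  · intro b
    exact ⟨a b, by simp [mem_canon]⟩
  · intro t
    obtain ⟨b, hb⟩ := h0
    exact ⟨b, by simp [mem_canon, hb]⟩

lemma upset_canon (a : Fin n → Fin m) (b : Fin n) : upset (canon a) b = Finset.Iio (a b) := by
  ext t
  rw [mem_upset, mem_canon, Finset.mem_Iio, Fin.lt_def]

lemma card_upset_canon (a : Fin n → Fin m) (b : Fin n) :
    (upset (canon a) b).card = (a b : ℕ) := by
  rw [upset_canon, Fin.card_Iio]

lemma F_canon (a : Fin n → Fin m) (hc : Cond m n (canon a)) :
    F ⟨canon a, hc⟩ = Finset.univ.val.map a := by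
  unfold F
  apply Multiset.map_congr rfl
  intro b _
  apply Fin.ext
  simp [szF, card_upset_canon]

/-- Given equal value multisets, find a permutation transporting one tuple to the other. -/
lemma exists_perm_comp {k : ℕ} {α : Type*} [LinearOrder α] (f g : Fin k → α)
    (h : Finset.univ.val.map f = Finset.univ.val.map g) :
    ∃ σ : Equiv.Perm (Fin k), ∀ i, f (σ i) = g i := by
  have hp : (List.ofFn f).Perm (List.ofFn g) := by
    rw [← Multiset.coe_eq_coe]
    simpa [Fin.univ_val_map] using h
  set σf := Tuple.sort f with hσf
  set σg := Tuple.sort g with hσg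
  have h1 : List.ofFn (f ∘ σf) = List.ofFn (g ∘ σg) :=
    List.Perm.eq_of_sortedLE
      (Tuple.monotone_sort f).sortedLE_ofFn (Tuple.monotone_sort g).sortedLE_ofFn
      (((σf.ofFn_comp_perm f).trans hp).trans (σg.ofFn_comp_perm g).symm)
  have h2 : f ∘ σf = g ∘ σg := List.ofFn_injective h1
  refine ⟨σg.symm.trans σf, fun i => ?_⟩
  have := congrFun h2 (σg.symm i)
  simpa using this

/-- A permutation making a tuple antitone. -/
lemma exists_antitone_perm {k : ℕ} (g : Fin k → ℕ) :
    ∃ τ : Equiv.Perm (Fin k), Antitone (g ∘ τ) := by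
  refine ⟨(Fin.revPerm).trans (Tuple.sort g), ?_⟩
  intro i j hij
  exact Tuple.monotone_sort g (by simpa using Fin.rev_le_rev.mpr hij)

/-- The main lemma: every relation is related to the canonical one built from its sizes. -/
lemma rel_canon (E : {E : Finset (Fin n × Fin m) // Cond m n E}) (a : Fin n → Fin m)
    (ha : Finset.univ.val.map a = F E) (hc : Cond m n (canon a)) :
    Rel ⟨canon a, hc⟩ E := by
  obtain ⟨σ, hσ⟩ := exists_perm_comp (szF E.1 E.2) a (by rw [ha]; rfl)
  obtain ⟨τ, hτ⟩ := exists_antitone_perm (rk E.1)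
  refine ⟨σ, τ, fun b t => ?_⟩
  have key : (σ b, τ t) ∈ E.1 ↔ (t : ℕ) < (upset E.1 (σ b)).card := by
    rw [← mem_upset, mem_upset_iff_rk E.2]
    have h1 : dg E.1 (σ b) ≤ rk E.1 (τ t) ↔
        (t : ℕ) < Fintype.card {i // dg E.1 (σ b) ≤ (rk E.1 ∘ τ) i} :=
      by rw [Fintype.card_subtype]
         exact (Tuple.lt_card_ge_iff_apply_ge_of_antitone (f := rk E.1 ∘ τ) (a := dg E.1 (σ b))
           (j := t) hτ).symm
    rw [h1]
    have h2 : Fintype.card {i // dg E.1 (σ b) ≤ (rk E.1 ∘ τ) i} =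
        Fintype.card {i // dg E.1 (σ b) ≤ rk E.1 i} :=
      Fintype.card_congr (τ.subtypeEquiv (fun i => Iff.rfl))
    rw [h2, Fintype.card_subtype, upset_eq_filter E.2]
  rw [mem_canon, key]
  have : (upset E.1 (σ b)).card = (a b : ℕ) := by
    have := hσ b
    rw [← this]
    rfl
  rw [this]

end UnlabeledFaceoff

open UnlabeledFaceoff in
/-- The number of unlabeled height-2 bipartite posets with `m ≥ 1` top elements and
`n ≥ 1` bottom elements, avoiding `(2+2)` (up-sets of bottom vertices form a chain) and
having no all-seeing vertices, is `(m+n-2).choose (n-1)`.  Unlabeled structures are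
orbits of labeled relations under relabeling the two sides separately. -/
theorem unlabeled_faceoff_count (m n : ℕ) (hm : 1 ≤ m) (hn : 1 ≤ n) :
    Nat.card (Quot (fun (E E' : {E : Finset (Fin n × Fin m) //
        (∀ b b' : Fin n, (∀ t, (b, t) ∈ E → (b', t) ∈ E) ∨ (∀ t, (b', t) ∈ E → (b, t) ∈ E)) ∧
        (∀ b : Fin n, ∃ t : Fin m, (b, t) ∉ E) ∧
        (∀ t : Fin m, ∃ b : Fin n, (b, t) ∉ E)}) =>
      ∃ (σ : Equiv.Perm (Fin n)) (τ : Equiv.Perm (Fin m)),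
        ∀ (b : Fin n) (t : Fin m), (b, t) ∈ E.1 ↔ (σ b, τ t) ∈ E'.1))
    = (m + n - 2).choose (n - 1) := by
  haveI : NeZero m := ⟨by omega⟩
  show Nat.card (Quot (Rel (m := m) (n := n))) = (m + n - 2).choose (n - 1)
  -- tuple from a multiset of the right size
  let aOf : ∀ s : Multiset (Fin m), Multiset.card s = n → Fin n → Fin m :=
    fun s hs b => s.toList.get (Fin.cast (by rw [Multiset.length_toList, hs]) b)
  have map_aOf : ∀ (s : Multiset (Fin m)) (hs : Multiset.card s = n),
      Finset.univ.val.map (aOf s hs) = s := by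
    intro s hs
    rw [Fin.univ_val_map]
    have hl : List.ofFn (aOf s hs) = s.toList := by
      apply List.ext_getElem
      · simp [Multiset.length_toList, hs]
      · intro i h1 h2
        simp [aOf, List.getElem_ofFn]
    rw [hl, Multiset.coe_toList]
  have zero_exists : ∀ (s : Multiset (Fin m)) (hs : Multiset.card s = n),
      (0 : Fin m) ∈ s → ∃ b, ((aOf s hs b : Fin m) : ℕ) = 0 := by
    intro s hs h0
    rw [← map_aOf s hs] at h0
    obtain ⟨b, _, hb⟩ := Multiset.mem_map.mp h0
    exact ⟨b, by simp [hb]⟩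
  let T := {s : Multiset (Fin m) // Multiset.card s = n ∧ (0 : Fin m) ∈ s}
  have e1 : Quot (Rel (m := m) (n := n)) ≃ T := by
    refine
      { toFun := Quot.lift (fun E => (⟨F E, card_F E, zero_mem_F hn E⟩ : T))
          (fun E E' h => Subtype.ext (F_eq_of_rel h))
        invFun := fun s =>
          Quot.mk _ ⟨canon (aOf s.1 s.2.1), cond_canon _ (zero_exists s.1 s.2.1 s.2.2)⟩
        left_inv := ?_
        right_inv := ?_ }
    · apply Quot.ind
      intro E
      exact Quot.sound (rel_canon E (aOf (F E) (card_F E)) (map_aOf (F E) (card_F E))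
        (cond_canon _ (zero_exists (F E) (card_F E) (zero_mem_F hn E))))
    · intro s
      exact Subtype.ext ((F_canon _ _).trans (map_aOf s.1 s.2.1))
  have e2 : T ≃ Sym (Fin m) (n - 1) :=
    { toFun := fun s => ⟨s.1.erase 0, by
        rw [Multiset.card_erase_of_mem s.2.2, s.2.1]; rfl⟩
      invFun := fun t => ⟨(0 : Fin m) ::ₘ t.1, by
        constructor
        · rw [Multiset.card_cons, t.2]; omega
        · exact Multiset.mem_cons_self _ _⟩
      left_inv := fun s => Subtype.ext (Multiset.cons_erase s.2.2)
      right_inv := fun t => Subtype.ext (Multiset.erase_cons_head _ _) }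
  rw [Nat.card_congr (e1.trans e2), Nat.card_eq_fintype_card, Sym.card_sym_eq_choose,
    Fintype.card_fin]
  congr 1
  omega
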